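/- For every s ∈ [0, 2π], one has 0 ≤ 2(1 − cos s) ≤ s² · e^{−s²/12}. -/

import Mathlib

open Real

lemma aux_nonneg {f f' : ℝ → ℝ} (hd : ∀ x, HasDerivAt f (f' x) x)
    (h0 : f 0 = 0) (hf' : ∀ x, 0 ≤ x → 0 ≤ f' x) {x : ℝ} (hx : 0 ≤ x) : 0 ≤ f x := by
  have hm : MonotoneOn f (Set.Ici 0) :=
    monotoneOn_of_hasDerivWithinAt_nonneg (convex_Ici 0)
      (fun y _ => (hd y).continuousAt.continuousWithinAt)
      (fun y hy => (hd y).hasDerivWithinAt)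
      (fun y hy => hf' y (le_of_lt (by simpa [interior_Ici] using hy)))
  have := hm (Set.mem_Ici.2 le_rfl) hx hx
  linarith [h0 ▸ this]

lemma sin_ge2 {x : ℝ} (hx : 0 ≤ x) : x - x^3/6 ≤ sin x := by
  have h := aux_nonneg (f := fun x => sin x - (x - x^3/6))
      (f' := fun x => cos x - (1 - x^2/2)) (fun y => by
        have : HasDerivAt (fun x : ℝ => sin x - (x - x^3/6))
            (cos y - (1 - (3:ℕ) * y^(3-1)/6)) y :=
          (Real.hasDerivAt_sin y).sub ((hasDerivAt_id y).sub ((hasDerivAt_pow 3 y).div_const 6))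
        convert this using 1
        push_cast; ring)
      (by norm_num)
      (fun y hy => by have := Real.one_sub_sq_div_two_le_cos (x := y); linarith) hx
  simpa using h

lemma cos_le2 {x : ℝ} (hx : 0 ≤ x) : cos x ≤ 1 - x^2/2 + x^4/24 := by
  have h := aux_nonneg (f := fun x => 1 - x^2/2 + x^4/24 - cos x)
      (f' := fun x => sin x - (x - x^3/6)) (fun y => by
        have : HasDerivAt (fun x : ℝ => 1 - x^2/2 + x^4/24 - cos x)
            (0 - (2:ℕ)*y^(2-1)/2 + (4:ℕ)*y^(4-1)/24 - (-sin y)) y :=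
          (((hasDerivAt_const y (1:ℝ)).sub ((hasDerivAt_pow 2 y).div_const 2)).add
            ((hasDerivAt_pow 4 y).div_const 24)).sub (Real.hasDerivAt_cos y)
        convert this using 1
        push_cast; ring)
      (by norm_num)
      (fun y hy => by have := sin_ge2 hy; linarith) hx
  linarith [h]

lemma sin_le3 {x : ℝ} (hx : 0 ≤ x) : sin x ≤ x - x^3/6 + x^5/120 := by
  have h := aux_nonneg (f := fun x => x - x^3/6 + x^5/120 - sin x)
      (f' := fun x => 1 - x^2/2 + x^4/24 - cos x) (fun y => by
        have : HasDerivAt (fun x : ℝ => x - x^3/6 + x^5/120 - sin x)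
            (1 - (3:ℕ)*y^(3-1)/6 + (5:ℕ)*y^(5-1)/120 - cos y) y :=
          (((hasDerivAt_id y).sub ((hasDerivAt_pow 3 y).div_const 6)).add
            ((hasDerivAt_pow 5 y).div_const 120)).sub (Real.hasDerivAt_sin y)
        convert this using 1
        push_cast; ring)
      (by norm_num)
      (fun y hy => by have := cos_le2 hy; linarith) hx
  linarith [h]

lemma cos_ge3 {x : ℝ} (hx : 0 ≤ x) : 1 - x^2/2 + x^4/24 - x^6/720 ≤ cos x := by
  have h := aux_nonneg (f := fun x => cos x - (1 - x^2/2 + x^4/24 - x^6/720))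
      (f' := fun x => (x - x^3/6 + x^5/120) - sin x) (fun y => by
        have : HasDerivAt (fun x : ℝ => cos x - (1 - x^2/2 + x^4/24 - x^6/720))
            ((-sin y) - (0 - (2:ℕ)*y^(2-1)/2 + (4:ℕ)*y^(4-1)/24 - (6:ℕ)*y^(6-1)/720)) y :=
          (Real.hasDerivAt_cos y).sub ((((hasDerivAt_const y (1:ℝ)).sub
            ((hasDerivAt_pow 2 y).div_const 2)).add
            ((hasDerivAt_pow 4 y).div_const 24)).sub ((hasDerivAt_pow 6 y).div_const 720))
        convert this using 1
        push_cast; ring)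
      (by norm_num)
      (fun y hy => by have := sin_le3 hy; linarith) hx
  linarith [h]

lemma sin_ge4 {x : ℝ} (hx : 0 ≤ x) : x - x^3/6 + x^5/120 - x^7/5040 ≤ sin x := by
  have h := aux_nonneg (f := fun x => sin x - (x - x^3/6 + x^5/120 - x^7/5040))
      (f' := fun x => cos x - (1 - x^2/2 + x^4/24 - x^6/720)) (fun y => by
        have : HasDerivAt (fun x : ℝ => sin x - (x - x^3/6 + x^5/120 - x^7/5040))
            (cos y - (1 - (3:ℕ)*y^(3-1)/6 + (5:ℕ)*y^(5-1)/120 - (7:ℕ)*y^(7-1)/5040)) y :=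
          (Real.hasDerivAt_sin y).sub ((((hasDerivAt_id y).sub
            ((hasDerivAt_pow 3 y).div_const 6)).add
            ((hasDerivAt_pow 5 y).div_const 120)).sub ((hasDerivAt_pow 7 y).div_const 5040))
        convert this using 1
        push_cast; ring)
      (by norm_num)
      (fun y hy => by have := cos_ge3 hy; linarith) hx
  linarith [h]

lemma cos_le4 {x : ℝ} (hx : 0 ≤ x) : cos x ≤ 1 - x^2/2 + x^4/24 - x^6/720 + x^8/40320 := by
  have h := aux_nonneg (f := fun x => 1 - x^2/2 + x^4/24 - x^6/720 + x^8/40320 - cos x)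
      (f' := fun x => sin x - (x - x^3/6 + x^5/120 - x^7/5040)) (fun y => by
        have : HasDerivAt (fun x : ℝ => 1 - x^2/2 + x^4/24 - x^6/720 + x^8/40320 - cos x)
            (0 - (2:ℕ)*y^(2-1)/2 + (4:ℕ)*y^(4-1)/24 - (6:ℕ)*y^(6-1)/720 + (8:ℕ)*y^(8-1)/40320 - (-sin y)) y :=
          (((((hasDerivAt_const y (1:ℝ)).sub ((hasDerivAt_pow 2 y).div_const 2)).add
            ((hasDerivAt_pow 4 y).div_const 24)).sub
            ((hasDerivAt_pow 6 y).div_const 720)).add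
            ((hasDerivAt_pow 8 y).div_const 40320)).sub (Real.hasDerivAt_cos y)
        convert this using 1
        push_cast; ring)
      (by norm_num)
      (fun y hy => by have := sin_ge4 hy; linarith) hx
  linarith [h]

lemma sin_le5 {x : ℝ} (hx : 0 ≤ x) :
    sin x ≤ x - x^3/6 + x^5/120 - x^7/5040 + x^9/362880 := by
  have h := aux_nonneg (f := fun x => x - x^3/6 + x^5/120 - x^7/5040 + x^9/362880 - sin x)
      (f' := fun x => 1 - x^2/2 + x^4/24 - x^6/720 + x^8/40320 - cos x) (fun y => by
        have : HasDerivAt (fun x : ℝ => x - x^3/6 + x^5/120 - x^7/5040 + x^9/362880 - sin x)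
            (1 - (3:ℕ)*y^(3-1)/6 + (5:ℕ)*y^(5-1)/120 - (7:ℕ)*y^(7-1)/5040 + (9:ℕ)*y^(9-1)/362880 - cos y) y :=
          (((((hasDerivAt_id y).sub ((hasDerivAt_pow 3 y).div_const 6)).add
            ((hasDerivAt_pow 5 y).div_const 120)).sub
            ((hasDerivAt_pow 7 y).div_const 5040)).add
            ((hasDerivAt_pow 9 y).div_const 362880)).sub (Real.hasDerivAt_sin y)
        convert this using 1
        push_cast; ring)
      (by norm_num)
      (fun y hy => by have := cos_le4 hy; linarith) hx
  linarith [h]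

lemma expNeg_hasDeriv (y : ℝ) : HasDerivAt (fun x : ℝ => exp (-x)) (-exp (-y)) y := by
  simpa [Function.comp_def] using (Real.hasDerivAt_exp (-y)).comp y (hasDerivAt_neg y)

lemma exp_le2 {x : ℝ} (hx : 0 ≤ x) : exp (-x) ≤ 1 - x + x^2/2 := by
  have h := aux_nonneg (f := fun x => 1 - x + x^2/2 - exp (-x))
      (f' := fun x => exp (-x) - (1 - x)) (fun y => by
        have : HasDerivAt (fun x : ℝ => 1 - x + x^2/2 - exp (-x))
            (0 - 1 + (2:ℕ)*y^(2-1)/2 - (-exp (-y))) y :=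
          (((hasDerivAt_const y (1:ℝ)).sub (hasDerivAt_id y)).add
            ((hasDerivAt_pow 2 y).div_const 2)).sub (expNeg_hasDeriv y)
        convert this using 1
        push_cast; ring)
      (by norm_num)
      (fun y hy => by have := Real.add_one_le_exp (-y); show (0:ℝ) ≤ exp (-y) - (1 - y); linarith) hx
  linarith [h]

lemma exp_ge3 {x : ℝ} (hx : 0 ≤ x) : 1 - x + x^2/2 - x^3/6 ≤ exp (-x) := by
  have h := aux_nonneg (f := fun x => exp (-x) - (1 - x + x^2/2 - x^3/6))
      (f' := fun x => (1 - x + x^2/2) - exp (-x)) (fun y => by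
        have : HasDerivAt (fun x : ℝ => exp (-x) - (1 - x + x^2/2 - x^3/6))
            ((-exp (-y)) - (0 - 1 + (2:ℕ)*y^(2-1)/2 - (3:ℕ)*y^(3-1)/6)) y :=
          (expNeg_hasDeriv y).sub ((((hasDerivAt_const y (1:ℝ)).sub (hasDerivAt_id y)).add
            ((hasDerivAt_pow 2 y).div_const 2)).sub ((hasDerivAt_pow 3 y).div_const 6))
        convert this using 1
        push_cast; ring)
      (by norm_num)
      (fun y hy => by have := exp_le2 hy; show (0:ℝ) ≤ (1 - y + y^2/2) - exp (-y); linarith) hx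
  linarith [h]

lemma exp_le4 {x : ℝ} (hx : 0 ≤ x) : exp (-x) ≤ 1 - x + x^2/2 - x^3/6 + x^4/24 := by
  have h := aux_nonneg (f := fun x => 1 - x + x^2/2 - x^3/6 + x^4/24 - exp (-x))
      (f' := fun x => exp (-x) - (1 - x + x^2/2 - x^3/6)) (fun y => by
        have : HasDerivAt (fun x : ℝ => 1 - x + x^2/2 - x^3/6 + x^4/24 - exp (-x))
            (0 - 1 + (2:ℕ)*y^(2-1)/2 - (3:ℕ)*y^(3-1)/6 + (4:ℕ)*y^(4-1)/24 - (-exp (-y))) y :=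
          (((((hasDerivAt_const y (1:ℝ)).sub (hasDerivAt_id y)).add
            ((hasDerivAt_pow 2 y).div_const 2)).sub
            ((hasDerivAt_pow 3 y).div_const 6)).add
            ((hasDerivAt_pow 4 y).div_const 24)).sub (expNeg_hasDeriv y)
        convert this using 1
        push_cast; ring)
      (by norm_num)
      (fun y hy => by have := exp_ge3 hy; show (0:ℝ) ≤ exp (-y) - (1 - y + y^2/2 - y^3/6); linarith) hx
  linarith [h]

lemma exp_ge5 {x : ℝ} (hx : 0 ≤ x) :
    1 - x + x^2/2 - x^3/6 + x^4/24 - x^5/120 ≤ exp (-x) := by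
  have h := aux_nonneg (f := fun x => exp (-x) - (1 - x + x^2/2 - x^3/6 + x^4/24 - x^5/120))
      (f' := fun x => (1 - x + x^2/2 - x^3/6 + x^4/24) - exp (-x)) (fun y => by
        have : HasDerivAt (fun x : ℝ => exp (-x) - (1 - x + x^2/2 - x^3/6 + x^4/24 - x^5/120))
            ((-exp (-y)) - (0 - 1 + (2:ℕ)*y^(2-1)/2 - (3:ℕ)*y^(3-1)/6 + (4:ℕ)*y^(4-1)/24 - (5:ℕ)*y^(5-1)/120)) y :=
          (expNeg_hasDeriv y).sub ((((((hasDerivAt_const y (1:ℝ)).sub (hasDerivAt_id y)).add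
            ((hasDerivAt_pow 2 y).div_const 2)).sub
            ((hasDerivAt_pow 3 y).div_const 6)).add
            ((hasDerivAt_pow 4 y).div_const 24)).sub ((hasDerivAt_pow 5 y).div_const 120))
        convert this using 1
        push_cast; ring)
      (by norm_num)
      (fun y hy => by have := exp_le4 hy; show (0:ℝ) ≤ (1 - y + y^2/2 - y^3/6 + y^4/24) - exp (-y); linarith) hx
  linarith [h]

lemma cubic_nonneg {v : ℝ} (h0 : 0 ≤ v) (h1 : v ≤ 9.9225) :
    0 ≤ 36288 - 3744*v + 192*v^2 - 7*v^3 := by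
  nlinarith [sq_nonneg (v - 15), mul_nonneg (mul_nonneg h0 h0) (sub_nonneg.2 h1)]

lemma key_ineq {t : ℝ} (h0 : 0 ≤ t) (h1 : t ≤ π) : sin t ≤ t * exp (-(t^2)/6) := by
  have hpi : t ≤ 3.15 := h1.trans (by linarith [Real.pi_lt_d2])
  have hv : t^2 ≤ 9.9225 := by nlinarith
  have hc := cubic_nonneg (sq_nonneg t) hv
  have hs := sin_le5 h0
  have hx : (0:ℝ) ≤ t^2/6 := by positivity
  have he := exp_ge5 hx
  have hmul : t * (1 - t^2/6 + (t^2/6)^2/2 - (t^2/6)^3/6 + (t^2/6)^4/24 - (t^2/6)^5/120)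
      ≤ t * exp (-(t^2/6)) := mul_le_mul_of_nonneg_left he h0
  have hpoly : t - t^3/6 + t^5/120 - t^7/5040 + t^9/362880 ≤
      t * (1 - t^2/6 + (t^2/6)^2/2 - (t^2/6)^3/6 + (t^2/6)^4/24 - (t^2/6)^5/120) := by
    nlinarith [mul_nonneg (pow_nonneg h0 5) hc]
  have : -(t^2/6) = -(t^2)/6 := by ring
  rw [this] at hmul
  linarith

/-- For every `s ∈ [0, 2π]`, `0 ≤ 2(1 - cos s) ≤ s² e^{-s²/12}`. -/
theorem stmt2 (s : ℝ) (hs : s ∈ Set.Icc 0 (2 * Real.pi)) :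
    0 ≤ 2 * (1 - Real.cos s) ∧
      2 * (1 - Real.cos s) ≤ s ^ 2 * Real.exp (-(s ^ 2) / 12) := by
  obtain ⟨hs0, hs2⟩ := hs
  constructor
  · linarith [Real.cos_le_one s]
  · set t := s / 2 with ht
    have ht0 : 0 ≤ t := by positivity
    have htpi : t ≤ π := by simp only [ht]; linarith
    have hsin0 : 0 ≤ sin t := Real.sin_nonneg_of_nonneg_of_le_pi ht0 htpi
    have hkey := key_ineq ht0 htpi
    have hcos : cos s = 1 - 2 * sin t ^ 2 := by
      have : s = 2 * t := by rw [ht]; ring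
      rw [this, Real.cos_two_mul, ← Real.sin_sq_add_cos_sq t]
      ring
    have hsq : sin t ^ 2 ≤ (t * exp (-(t^2)/6)) ^ 2 := by
      apply pow_le_pow_left₀ hsin0 hkey
    have hexp : (t * exp (-(t^2)/6)) ^ 2 = t^2 * exp (-(t^2)/3) := by
      rw [mul_pow, ← Real.exp_nat_mul]
      congr 1
      push_cast; ring_nf
    have hst : s = 2 * t := by rw [ht]; ring
    have harg : -(s^2)/12 = -(t^2)/3 := by rw [hst]; ring
    rw [hcos, harg, hst]
    calc 2 * (1 - (1 - 2 * sin t ^ 2)) = 4 * sin t ^ 2 := by ring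
    _ ≤ 4 * (t^2 * exp (-(t^2)/3)) := by rw [← hexp]; linarith
    _ = (2*t)^2 * exp (-(t^2)/3) := by ring
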